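/- Let f(U,V) = ½‖P(A − UV)‖_F² be the masked matrix-factorization loss and φ(U,V) = 3·((‖U‖_F² + ‖V‖_F²)/2)² + c₂·((‖U‖_F² + ‖V‖_F²)/2) with c₂ = ‖P(A)‖_F. Then Lφ − f and Lφ + f are convex for every L ≥ 1. -/

import Mathlib

set_option linter.unusedSectionVars false
set_option maxHeartbeats 1000000

open Finset
namespace Stmt19Aux

variable {I J K : Type*} [Fintype I] [Fintype J] [Fintype K] [DecidableEq I] [DecidableEq J]

def ip (X Y : I → J → ℝ) : ℝ := ∑ i, ∑ j, X i j * Y i j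

def maskd (Ω : Finset (I × J)) (X : I → J → ℝ) : I → J → ℝ :=
  fun i j => if (i, j) ∈ Ω then X i j else 0

lemma ip_nonneg (X : I → J → ℝ) : 0 ≤ ip X X :=
  Finset.sum_nonneg fun _ _ => Finset.sum_nonneg fun _ _ => mul_self_nonneg _

lemma expand3sq (e2 e3 : ℝ) (X Y Z : I → J → ℝ) :
    ∑ i, ∑ j, (X i j + e2 * Y i j + e3 * Z i j) ^ 2
      = ip X X + e2 ^ 2 * ip Y Y + e3 ^ 2 * ip Z Z
        + 2 * e2 * ip X Y + 2 * e3 * ip X Z + 2 * e2 * e3 * ip Y Z := by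
  have h : ∀ i j, (X i j + e2 * Y i j + e3 * Z i j) ^ 2
      = X i j * X i j + e2 ^ 2 * (Y i j * Y i j) + e3 ^ 2 * (Z i j * Z i j)
        + 2 * e2 * (X i j * Y i j) + 2 * e3 * (X i j * Z i j)
        + 2 * e2 * e3 * (Y i j * Z i j) := by intro i j; ring
  simp only [h, Finset.sum_add_distrib, ← Finset.mul_sum, ip]

lemma expand2sq (e : ℝ) (X Y : I → J → ℝ) :
    ∑ i, ∑ j, (X i j + e * Y i j) ^ 2
      = ip X X + 2 * e * ip X Y + e ^ 2 * ip Y Y := by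
  have h : ∀ i j, (X i j + e * Y i j) ^ 2
      = X i j * X i j + 2 * e * (X i j * Y i j) + e ^ 2 * (Y i j * Y i j) := by
    intro i j; ring
  simp only [h, Finset.sum_add_distrib, ← Finset.mul_sum, ip]

lemma ip_lin3 (e2 e3 : ℝ) (X Y Z W : I → J → ℝ) :
    ip (fun i j => X i j + e2 * Y i j + e3 * Z i j) W
      = ip X W + e2 * ip Y W + e3 * ip Z W := by
  have h : ∀ i j, (X i j + e2 * Y i j + e3 * Z i j) * W i j
      = X i j * W i j + e2 * (Y i j * W i j) + e3 * (Z i j * W i j) := by intro i j; ring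
  simp only [ip, h, Finset.sum_add_distrib, ← Finset.mul_sum]

lemma ip_lin2 (e : ℝ) (X Y W : I → J → ℝ) :
    ip (fun i j => X i j + e * Y i j) W = ip X W + e * ip Y W := by
  have h : ∀ i j, (X i j + e * Y i j) * W i j
      = X i j * W i j + e * (Y i j * W i j) := by intro i j; ring
  simp only [ip, h, Finset.sum_add_distrib, ← Finset.mul_sum]

lemma ip_self_lin2 (e : ℝ) (X Y : I → J → ℝ) :
    ip (fun i j => X i j + e * Y i j) (fun i j => X i j + e * Y i j)
      = ip X X + 2 * e * ip X Y + e ^ 2 * ip Y Y := by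
  have h : ∀ i j, (X i j + e * Y i j) * (X i j + e * Y i j)
      = X i j * X i j + 2 * e * (X i j * Y i j) + e ^ 2 * (Y i j * Y i j) := by
    intro i j; ring
  simp only [ip, h, Finset.sum_add_distrib, ← Finset.mul_sum]

lemma two_ip_le (X Y : I → J → ℝ) : 2 * ip X Y ≤ ip X X + ip Y Y := by
  have h0 := ip_nonneg (fun i j => X i j + (-1) * Y i j)
  rw [ip_self_lin2] at h0
  nlinarith

lemma sum_prod_eq_ip (F G : I → J → ℝ) :
    (∑ p : I × J, F p.1 p.2 * G p.1 p.2) = ip F G := by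
  rw [ip, ← Finset.univ_product_univ, Finset.sum_product]

lemma ip_cs (X Y : I → J → ℝ) : ip X Y ^ 2 ≤ ip X X * ip Y Y := by
  have h := Finset.sum_mul_sq_le_sq_mul_sq Finset.univ
    (fun p : I × J => X p.1 p.2) (fun p : I × J => Y p.1 p.2)
  simp only [pow_two] at h ⊢
  rw [sum_prod_eq_ip, sum_prod_eq_ip, sum_prod_eq_ip] at h
  exact h

lemma ip_mul_le (X : I → K → ℝ) (Y : K → J → ℝ) :
    ip (fun i j => ∑ k, X i k * Y k j) (fun i j => ∑ k, X i k * Y k j)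
      ≤ ip X X * ip Y Y := by
  have h1 : ∀ (i : I) (j : J), (∑ k, X i k * Y k j) * (∑ k, X i k * Y k j)
      ≤ (∑ k, X i k * X i k) * (∑ k, Y k j * Y k j) := by
    intro i j
    have := Finset.sum_mul_sq_le_sq_mul_sq Finset.univ (fun k => X i k) (fun k => Y k j)
    simpa [pow_two] using this
  calc ip (fun i j => ∑ k, X i k * Y k j) (fun i j => ∑ k, X i k * Y k j)
      = ∑ i, ∑ j, (∑ k, X i k * Y k j) * (∑ k, X i k * Y k j) := rfl
    _ ≤ ∑ i, ∑ j, (∑ k, X i k * X i k) * (∑ k, Y k j * Y k j) :=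
        Finset.sum_le_sum fun i _ => Finset.sum_le_sum fun j _ => h1 i j
    _ = (∑ i, ∑ k, X i k * X i k) * (∑ j, ∑ k, Y k j * Y k j) := by
        simp_rw [← Finset.mul_sum, ← Finset.sum_mul]
    _ = ip X X * ip Y Y := by rw [ip, ip, Finset.sum_comm (f := fun j k => Y k j * Y k j)]

lemma mask_le (Ω : Finset (I × J)) (X : I → J → ℝ) :
    ip (maskd Ω X) (maskd Ω X) ≤ ip X X := by
  unfold ip maskd
  refine Finset.sum_le_sum fun i _ => Finset.sum_le_sum fun j _ => ?_
  by_cases h : (i, j) ∈ Ω <;> simp [h, mul_self_nonneg]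

lemma stmt19_abs_le_sq (x B : ℝ) (h : x ^ 2 ≤ B ^ 2) (hB : 0 ≤ B) : |x| ≤ B := by
  have := Real.sqrt_le_sqrt h
  rwa [Real.sqrt_sq_eq_abs, Real.sqrt_sq_eq_abs, abs_of_nonneg hB] at this

lemma quartic_convex (c0 c1 c2 c3 c4 : ℝ)
    (h : ∀ x : ℝ, 0 ≤ 2*c2 + 6*c3*x + 12*c4*x^2) :
    ConvexOn ℝ Set.univ (fun x : ℝ => c0 + c1*x + c2*x^2 + c3*x^3 + c4*x^4) := by
  have hder : ∀ x : ℝ, HasDerivAt (fun x : ℝ => c0 + c1*x + c2*x^2 + c3*x^3 + c4*x^4)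
      (c1 + 2*c2*x + 3*c3*x^2 + 4*c4*x^3) x := by
    intro x
    have h1 := ((((hasDerivAt_const x c0).add ((hasDerivAt_id x).const_mul c1)).add
      ((hasDerivAt_pow 2 x).const_mul c2)).add ((hasDerivAt_pow 3 x).const_mul c3)).add
      ((hasDerivAt_pow 4 x).const_mul c4)
    refine h1.congr_deriv ?_
    norm_num
    ring
  have hder2 : ∀ x : ℝ, HasDerivAt (fun x : ℝ => c1 + 2*c2*x + 3*c3*x^2 + 4*c4*x^3)
      (2*c2 + 6*c3*x + 12*c4*x^2) x := by
    intro x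
    have h1 := (((hasDerivAt_const x c1).add ((hasDerivAt_id x).const_mul (2*c2))).add
      ((hasDerivAt_pow 2 x).const_mul (3*c3))).add ((hasDerivAt_pow 3 x).const_mul (4*c4))
    refine h1.congr_deriv ?_
    norm_num
    ring
  have hd1 : deriv (fun x : ℝ => c0 + c1*x + c2*x^2 + c3*x^3 + c4*x^4)
      = fun x => c1 + 2*c2*x + 3*c3*x^2 + 4*c4*x^3 := funext fun x => (hder x).deriv
  have hd2 : deriv (fun x : ℝ => c1 + 2*c2*x + 3*c3*x^2 + 4*c4*x^3)
      = fun x => 2*c2 + 6*c3*x + 12*c4*x^2 := funext fun x => (hder2 x).deriv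
  apply convexOn_of_deriv2_nonneg convex_univ
  · exact Continuous.continuousOn (by continuity)
  · exact fun x _ => ((hder x).differentiableAt).differentiableWithinAt
  · rw [hd1]
    exact fun x _ => ((hder2 x).differentiableAt).differentiableWithinAt
  · intro x _
    have : deriv^[2] (fun x : ℝ => c0 + c1*x + c2*x^2 + c3*x^3 + c4*x^4)
        = deriv (deriv (fun x : ℝ => c0 + c1*x + c2*x^2 + c3*x^3 + c4*x^4)) := by
      simp [Function.iterate_succ, Function.iterate_zero]
    rw [this, hd1, hd2]
    exact h x

lemma convexOn_of_line {E : Type*} [AddCommGroup E] [Module ℝ E] (F : E → ℝ)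
    (h : ∀ x d : E, ConvexOn ℝ Set.univ fun s : ℝ => F (x + s • d)) :
    ConvexOn ℝ Set.univ F := by
  refine ⟨convex_univ, fun x _ y _ a b ha hb hab => ?_⟩
  have h2 := (h x (y - x)).2 (Set.mem_univ (0:ℝ)) (Set.mem_univ (1:ℝ)) ha hb hab
  have e2 : x + b • (y - x) = a • x + b • y := by
    have hab' : a = 1 - b := by linarith
    rw [hab', smul_sub, sub_smul, one_smul]; abel
  have e3 : x + (y - x) = y := by abel
  simp only [smul_eq_mul, mul_zero, mul_one, zero_add, zero_smul, add_zero, one_smul] at h2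
  rw [e3, e2] at h2
  simpa using h2

end Stmt19Aux

open Stmt19Aux

theorem stmt19 {m n t : ℕ} (Ω : Finset (Fin m × Fin n)) (A : Matrix (Fin m) (Fin n) ℝ)
    (L : ℝ) (hL : 1 ≤ L)
    (P : Matrix (Fin m) (Fin n) ℝ → Matrix (Fin m) (Fin n) ℝ)
    (hP : P = fun Z => Matrix.of fun i j => if (i, j) ∈ Ω then Z i j else 0)
    (f : Matrix (Fin m) (Fin t) ℝ × Matrix (Fin t) (Fin n) ℝ → ℝ)
    (hf : f = fun w => (1 / 2) * ∑ i, ∑ j, (P (A - w.1 * w.2) i j) ^ 2)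
    (c₂ : ℝ) (hc₂ : c₂ = Real.sqrt (∑ i, ∑ j, (P A i j) ^ 2))
    (φ : Matrix (Fin m) (Fin t) ℝ × Matrix (Fin t) (Fin n) ℝ → ℝ)
    (hφ : φ = fun w =>
      3 * (((∑ i, ∑ j, (w.1 i j) ^ 2) + ∑ i, ∑ j, (w.2 i j) ^ 2) / 2) ^ 2
        + c₂ * (((∑ i, ∑ j, (w.1 i j) ^ 2) + ∑ i, ∑ j, (w.2 i j) ^ 2) / 2)) :
    ConvexOn ℝ Set.univ (fun w => L * φ w - f w) ∧
    ConvexOn ℝ Set.univ (fun w => L * φ w + f w) := by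
  subst hP
  have hc0 : 0 ≤ c₂ := hc₂ ▸ Real.sqrt_nonneg _
  have hc₂sq : ip (maskd Ω (fun i j => A i j)) (maskd Ω (fun i j => A i j)) = c₂ ^ 2 := by
    simp only [Matrix.of_apply] at hc₂
    rw [hc₂, Real.sq_sqrt (Finset.sum_nonneg fun _ _ => Finset.sum_nonneg fun _ _ => sq_nonneg _)]
    simp only [ip, maskd, Matrix.of_apply, pow_two]
  -- Hessian domination
  have hess : ∀ (U : Fin m → Fin t → ℝ) (V : Fin t → Fin n → ℝ)
      (H : Fin m → Fin t → ℝ) (K : Fin t → Fin n → ℝ),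
      |ip (maskd Ω (fun i j => ∑ k, (U i k * K k j + H i k * V k j)))
          (maskd Ω (fun i j => ∑ k, (U i k * K k j + H i k * V k j)))
        - 2 * ip (maskd Ω (fun i j => A i j - ∑ k, U i k * V k j))
            (maskd Ω (fun i j => ∑ k, H i k * K k j))|
        ≤ 6 * (ip U H + ip V K) ^ 2
          + 3 * (ip U U + ip V V) * (ip H H + ip K K)
          + c₂ * (ip H H + ip K K) := by
    intro U V H K
    set Wb := maskd Ω (fun i j => ∑ k, (U i k * K k j + H i k * V k j)) with hWb
    set Wa := maskd Ω (fun i j => A i j - ∑ k, U i k * V k j) with hWa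
    set Wc := maskd Ω (fun i j => ∑ k, H i k * K k j) with hWc
    set α := Real.sqrt (ip U U) with hαd
    set β := Real.sqrt (ip V V) with hβd
    set γ := Real.sqrt (ip H H) with hγd
    set δ := Real.sqrt (ip K K) with hδd
    have hα2 : α ^ 2 = ip U U := Real.sq_sqrt (ip_nonneg U)
    have hβ2 : β ^ 2 = ip V V := Real.sq_sqrt (ip_nonneg V)
    have hγ2 : γ ^ 2 = ip H H := Real.sq_sqrt (ip_nonneg H)
    have hδ2 : δ ^ 2 = ip K K := Real.sq_sqrt (ip_nonneg K)
    have hα0 : 0 ≤ α := Real.sqrt_nonneg _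
    have hβ0 : 0 ≤ β := Real.sqrt_nonneg _
    have hγ0 : 0 ≤ γ := Real.sqrt_nonneg _
    have hδ0 : 0 ≤ δ := Real.sqrt_nonneg _
    -- bound on ip Wb Wb
    have hb : ip Wb Wb ≤ 2 * (α ^ 2 * δ ^ 2) + 2 * (γ ^ 2 * β ^ 2) := by
      rw [hWb]
      refine le_trans (mask_le Ω _) ?_
      have e : (fun i j => ∑ k, (U i k * K k j + H i k * V k j))
          = fun i j => (fun i' j' => ∑ k, U i' k * K k j') i j
              + (1:ℝ) * (fun i' j' => ∑ k, H i' k * V k j') i j := by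
        funext i j
        simp [Finset.sum_add_distrib]
      rw [e, ip_self_lin2]
      have t1 := ip_mul_le U K
      have t2 := ip_mul_le H V
      have t3 := two_ip_le (fun i j => ∑ k, U i k * K k j) (fun i j => ∑ k, H i k * V k j)
      rw [← hα2, ← hδ2] at t1
      rw [← hγ2, ← hβ2] at t2
      nlinarith [t1, t2, t3]
    -- bound on ip Wc Wc
    have hcc : ip Wc Wc ≤ γ ^ 2 * δ ^ 2 := by
      rw [hWc]
      refine le_trans (mask_le Ω _) ?_
      have := ip_mul_le H K
      rw [← hγ2, ← hδ2] at this
      exact this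
    have hc0' : 0 ≤ ip Wc Wc := ip_nonneg Wc
    -- bound on ip Wa Wa
    have hW : ip (maskd Ω (fun i j => ∑ k, U i k * V k j))
        (maskd Ω (fun i j => ∑ k, U i k * V k j)) ≤ α ^ 2 * β ^ 2 := by
      refine le_trans (mask_le Ω _) ?_
      have := ip_mul_le U V
      rw [← hα2, ← hβ2] at this
      exact this
    have ea : Wa = fun i j => maskd Ω (fun i' j' => A i' j') i j
        + (-1:ℝ) * maskd Ω (fun i' j' => ∑ k, U i' k * V k j') i j := by
      rw [hWa]
      funext i j
      unfold maskd
      by_cases h : (i, j) ∈ Ω <;> simp [h] <;> ring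
    have hx : |ip (maskd Ω (fun i' j' => A i' j'))
        (maskd Ω (fun i' j' => ∑ k, U i' k * V k j'))| ≤ c₂ * (α * β) := by
      apply stmt19_abs_le_sq
      · have h1 := ip_cs (maskd Ω (fun i' j' => A i' j'))
          (maskd Ω (fun i' j' => ∑ k, U i' k * V k j'))
        rw [hc₂sq] at h1
        calc _ ≤ _ := h1
          _ ≤ c₂ ^ 2 * (α ^ 2 * β ^ 2) :=
            mul_le_mul_of_nonneg_left hW (sq_nonneg c₂)
          _ = (c₂ * (α * β)) ^ 2 := by ring
      · exact mul_nonneg hc0 (mul_nonneg hα0 hβ0)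
    have haa : ip Wa Wa ≤ (c₂ + α * β) ^ 2 := by
      rw [ea, ip_self_lin2, hc₂sq]
      have habs := abs_le.mp hx
      have hWnn := ip_nonneg (maskd Ω (fun i' j' => ∑ k, U i' k * V k j'))
      nlinarith [habs.1, habs.2, hW]
    have haann : 0 ≤ ip Wa Wa := ip_nonneg Wa
    -- bound on |ip Wa Wc|
    have hac : |ip Wa Wc| ≤ (c₂ + α * β) * (γ * δ) := by
      apply stmt19_abs_le_sq
      · calc ip Wa Wc ^ 2 ≤ ip Wa Wa * ip Wc Wc := ip_cs Wa Wc
          _ ≤ (c₂ + α * β) ^ 2 * (γ ^ 2 * δ ^ 2) := by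
              apply mul_le_mul haa hcc hc0' (sq_nonneg _)
          _ = ((c₂ + α * β) * (γ * δ)) ^ 2 := by ring
      · exact mul_nonneg (by nlinarith [mul_nonneg hα0 hβ0]) (mul_nonneg hγ0 hδ0)
    obtain ⟨hacl, hacr⟩ := abs_le.mp hac
    have hbnn := ip_nonneg Wb
    rw [abs_le, ← hα2, ← hβ2, ← hγ2, ← hδ2]
    constructor
    · nlinarith [sq_nonneg (ip U H + ip V K), mul_nonneg hc0 (sq_nonneg (γ - δ)),
        sq_nonneg (α*δ - β*γ), mul_nonneg (mul_nonneg hα0 hα0) (mul_nonneg hγ0 hγ0),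
        mul_nonneg (mul_nonneg hβ0 hβ0) (mul_nonneg hδ0 hδ0),
        mul_nonneg (mul_nonneg hα0 hα0) (mul_nonneg hδ0 hδ0),
        mul_nonneg (mul_nonneg hβ0 hβ0) (mul_nonneg hγ0 hγ0)]
    · nlinarith [sq_nonneg (ip U H + ip V K), mul_nonneg hc0 (sq_nonneg (γ - δ)),
        sq_nonneg (α*δ - β*γ), mul_nonneg (mul_nonneg hα0 hα0) (mul_nonneg hγ0 hγ0),
        mul_nonneg (mul_nonneg hβ0 hβ0) (mul_nonneg hδ0 hδ0),
        mul_nonneg (mul_nonneg hα0 hα0) (mul_nonneg hδ0 hδ0),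
        mul_nonneg (mul_nonneg hβ0 hβ0) (mul_nonneg hγ0 hγ0)]
  -- the key convexity statement
  have key : ∀ ε : ℝ, -1 ≤ ε → ε ≤ 1 →
      ConvexOn ℝ Set.univ (fun w : Matrix (Fin m) (Fin t) ℝ × Matrix (Fin t) (Fin n) ℝ =>
        L * φ w + ε * f w) := by
    intro ε hε1 hε2
    apply convexOn_of_line
    intro x d
    obtain ⟨U, V⟩ := x
    obtain ⟨H, K⟩ := d
    have hent1 : ∀ (τ : ℝ) (i : Fin m) (k : Fin t),
        ((U, V) + τ • (H, K)).1 i k = U i k + τ * H i k := by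
      intro τ i k
      simp [Prod.fst_add, Prod.smul_fst, Matrix.add_apply, Matrix.smul_apply, smul_eq_mul]
    have hent2 : ∀ (τ : ℝ) (k : Fin t) (j : Fin n),
        ((U, V) + τ • (H, K)).2 k j = V k j + τ * K k j := by
      intro τ k j
      simp [Prod.snd_add, Prod.smul_snd, Matrix.add_apply, Matrix.smul_apply, smul_eq_mul]
    set aM := maskd Ω (fun i j => A i j - ∑ k, U i k * V k j) with haM
    set bM := maskd Ω (fun i j => ∑ k, (U i k * K k j + H i k * V k j)) with hbM
    set cM := maskd Ω (fun i j => ∑ k, H i k * K k j) with hcM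
    have core : ∀ (τ : ℝ) (i : Fin m) (j : Fin n),
        A i j - ∑ k, (U i k + τ * H i k) * (V k j + τ * K k j)
          = (A i j - ∑ k, U i k * V k j)
            + (-τ) * (∑ k, (U i k * K k j + H i k * V k j))
            + (-τ^2) * (∑ k, H i k * K k j) := by
      intro τ i j
      have e2 : ∀ k : Fin t, (U i k + τ * H i k) * (V k j + τ * K k j)
          = U i k * V k j + τ * (U i k * K k j + H i k * V k j)
            + τ^2 * (H i k * K k j) := by intro k; ring
      rw [Finset.sum_congr rfl fun k _ => e2 k, Finset.sum_add_distrib,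
        Finset.sum_add_distrib, ← Finset.mul_sum, ← Finset.mul_sum]
      ring
    have hmask : ∀ τ : ℝ,
        maskd Ω (fun i j => A i j - ∑ k, (U i k + τ * H i k) * (V k j + τ * K k j))
          = fun i j => aM i j + (-τ) * bM i j + (-τ^2) * cM i j := by
      intro τ
      funext i j
      rw [haM, hbM, hcM]
      unfold maskd
      by_cases h : (i, j) ∈ Ω
      · simp only [h, if_true]
        rw [core τ i j]
      · simp [h]
    have hmaskb : ∀ τ : ℝ,
        maskd Ω (fun i j => ∑ k, ((U i k + τ * H i k) * K k j + H i k * (V k j + τ * K k j)))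
          = fun i j => bM i j + (2*τ) * cM i j := by
      intro τ
      funext i j
      rw [hbM, hcM]
      unfold maskd
      by_cases h : (i, j) ∈ Ω
      · simp only [h, if_true]
        have e2 : ∀ k : Fin t, (U i k + τ * H i k) * K k j + H i k * (V k j + τ * K k j)
            = (U i k * K k j + H i k * V k j) + (2*τ) * (H i k * K k j) := by intro k; ring
        rw [Finset.sum_congr rfl fun k _ => e2 k, Finset.sum_add_distrib, ← Finset.mul_sum]
      · simp [h]
    set p := ip U U + ip V V with hpd
    set r := ip U H + ip V K with hrd
    set s := ip H H + ip K K with hsd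
    set C0 := L * (3 * (p/2)^2 + c₂ * (p/2)) + ε * ((1/2) * ip aM aM) with hC0
    set C1 := L * (3 * p * r + c₂ * r) + ε * (- ip aM bM) with hC1
    set C2 := L * (3 * r^2 + (3/2) * p * s + (c₂/2) * s)
      + ε * ((1/2) * ip bM bM - ip aM cM) with hC2
    set C3 := L * (3 * r * s) + ε * (ip bM cM) with hC3
    set C4 := L * ((3/4) * s^2) + ε * ((1/2) * ip cM cM) with hC4
    have hnn : ∀ τ : ℝ, 0 ≤ 2*C2 + 6*C3*τ + 12*C4*τ^2 := by
      intro τ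
      have hh := hess (fun i k => U i k + τ * H i k) (fun k j => V k j + τ * K k j) H K
      beta_reduce at hh
      rw [hmask τ, hmaskb τ] at hh
      rw [ip_self_lin2 (2*τ) bM cM, ip_lin3 (-τ) (-τ^2) aM bM cM cM,
        ip_self_lin2 τ U H, ip_self_lin2 τ V K, ip_lin2 τ U H H, ip_lin2 τ V K K] at hh
      obtain ⟨hl, hr⟩ := abs_le.mp hh
      simp only [hC2, hC3, hC4, hpd, hrd, hsd]
      nlinarith [hl, hr, le_trans (abs_nonneg _) hh,
        (by linarith : (0:ℝ) ≤ 1 - ε), (by linarith : (0:ℝ) ≤ 1 + ε),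
        (by linarith : (0:ℝ) ≤ L - 1)]
    have hfun : (fun τ : ℝ => L * φ ((U, V) + τ • (H, K)) + ε * f ((U, V) + τ • (H, K)))
        = fun τ : ℝ => C0 + C1*τ + C2*τ^2 + C3*τ^3 + C4*τ^4 := by
      funext τ
      rw [hf, hφ]
      simp only [Matrix.of_apply]
      have eA : ∀ (i : Fin m) (j : Fin n),
          (A - ((U, V) + τ • (H, K)).1 * ((U, V) + τ • (H, K)).2) i j
            = A i j - ∑ k, (U i k + τ * H i k) * (V k j + τ * K k j) := by
        intro i j
        have e2 : (∑ k, ((U, V) + τ • (H, K)).1 i k * ((U, V) + τ • (H, K)).2 k j)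
            = ∑ k, (U i k + τ * H i k) * (V k j + τ * K k j) :=
          Finset.sum_congr rfl fun k _ => by rw [hent1 τ i k, hent2 τ k j]
        rw [Matrix.sub_apply, Matrix.mul_apply, e2]
      simp only [eA]
      have emask : ∀ (i : Fin m) (j : Fin n),
          (if (i,j) ∈ Ω then A i j - ∑ k, (U i k + τ * H i k) * (V k j + τ * K k j) else 0)
            = aM i j + (-τ) * bM i j + (-τ^2) * cM i j := by
        intro i j
        have h1 := congrFun (congrFun (hmask τ) i) j
        simpa [maskd] using h1
      simp only [emask]
      rw [expand3sq (-τ) (-τ^2) aM bM cM]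
      have eS1 : ∑ i, ∑ j, (((U, V) + τ • (H, K)).1 i j)^2
          = ip U U + 2*τ*ip U H + τ^2*ip H H := by
        rw [show (∑ i, ∑ j, (((U, V) + τ • (H, K)).1 i j)^2)
            = ∑ i, ∑ j, (U i j + τ * H i j)^2 from
          Finset.sum_congr rfl fun i _ => Finset.sum_congr rfl fun j _ => by rw [hent1 τ i j]]
        exact expand2sq τ U H
      have eS2 : ∑ i, ∑ j, (((U, V) + τ • (H, K)).2 i j)^2
          = ip V V + 2*τ*ip V K + τ^2*ip K K := by
        rw [show (∑ i, ∑ j, (((U, V) + τ • (H, K)).2 i j)^2)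
            = ∑ i, ∑ j, (V i j + τ * K i j)^2 from
          Finset.sum_congr rfl fun i _ => Finset.sum_congr rfl fun j _ => by rw [hent2 τ i j]]
        exact expand2sq τ V K
      rw [eS1, eS2]
      simp only [hC0, hC1, hC2, hC3, hC4, hpd, hrd, hsd]
      ring
    have hmain := quartic_convex C0 C1 C2 C3 C4 hnn
    rw [← hfun] at hmain
    exact hmain
  constructor
  · have h1 : (fun w : Matrix (Fin m) (Fin t) ℝ × Matrix (Fin t) (Fin n) ℝ =>
        L * φ w - f w) = fun w => L * φ w + (-1) * f w := by
      funext w; ring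
    rw [h1]
    exact key (-1) le_rfl (by norm_num)
  · have h2 : (fun w : Matrix (Fin m) (Fin t) ℝ × Matrix (Fin t) (Fin n) ℝ =>
        L * φ w + f w) = fun w => L * φ w + 1 * f w := by
      funext w; ring
    rw [h2]
    exact key 1 (by norm_num) le_rfl
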